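/- Let N = 2^n with n ≥ 5 (so N ≥ 32 ≥ 22), let H_N be the normalized Hadamard matrix of size N, and let y ∈ ℝ^N be any fixed unit vector. Let d be uniformly distributed on {−1,+1}^N and z be uniformly distributed on {−1/√N, +1/√N}^N, independently, and set x = D·H_N·z where D = diag(d). Then Pr[ |⟨x, y⟩| > 1/(2N) ] ≥ 3/5. -/

import Mathlib

set_option autoImplicit false
set_option maxHeartbeats 1600000

open Matrix

/-- The normalized Hadamard matrix of size `N = 2^n`: the `n`-fold Kronecker power of
`(1/√2)·[[1,1],[1,-1]]`, with rows and columns indexed by `Fin n → Fin 2`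
(a type of cardinality `2^n`). -/
noncomputable def hadamardMatrix (n : ℕ) :
    Matrix (Fin n → Fin 2) (Fin n → Fin 2) ℝ :=
  Matrix.of fun a b =>
    ∏ i : Fin n, (if a i = 1 ∧ b i = 1 then -(1 / Real.sqrt 2) else 1 / Real.sqrt 2)

namespace OSP

noncomputable def sg (b : Bool) : ℝ := if b then 1 else -1

lemma sg_sq (b : Bool) : sg b ^ 2 = 1 := by cases b <;> simp [sg]

lemma sg_add_sg_not (b : Bool) : sg b + sg (!b) = 0 := by cases b <;> simp [sg]

lemma sg_mul_abs {x : ℝ} (hx : x ≠ 0) : sg (decide (0 < x)) * x = |x| := by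
  rcases lt_trichotomy x 0 with h | h | h
  · simp [sg, not_lt.mpr h.le, abs_of_neg h, h.not_gt]
  · exact absurd h hx
  · simp [sg, h, abs_of_pos h]

lemma bool_ne_iff {b c : Bool} : b ≠ c ↔ b = !c := by cases b <;> cases c <;> simp

section Cube

variable {ι : Type*} [Fintype ι] [DecidableEq ι]

lemma sum_sg_mul_eq_zero (a : ι) (F : (ι → Bool) → ℝ)
    (hF : ∀ (d : ι → Bool) (b : Bool), F (Function.update d a b) = F d) :
    ∑ d : ι → Bool, sg (d a) * F d = 0 := by
  apply Finset.sum_ninvolution (fun d => Function.update d a (! d a))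
  · intro d
    have h1 : Function.update d a (! d a) a = ! d a := by simp
    rw [h1, hF]
    linear_combination F d * sg_add_sg_not (d a)
  · intro d _ hc
    have := congrFun hc a
    simp at this
  · intro d; exact Finset.mem_univ _
  · intro d
    funext x
    by_cases hx : x = a
    · subst hx; simp
    · simp [Function.update_of_ne hx]

omit [Fintype ι] in
lemma update_sum (s : Finset ι) (a : ι) (ha : a ∉ s) (c : ι → ℝ) (d : ι → Bool) (b : Bool) :
    ∑ i ∈ s, sg (Function.update d a b i) * c i = ∑ i ∈ s, sg (d i) * c i := by
  apply Finset.sum_congr rfl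
  intro i hi
  have : i ≠ a := fun h => ha (h ▸ hi)
  rw [Function.update_of_ne this]

/-- Second moment of a Rademacher sum over the Boolean cube. -/
lemma sum_sq_eq (s : Finset ι) (c : ι → ℝ) :
    ∑ d : ι → Bool, (∑ i ∈ s, sg (d i) * c i) ^ 2
      = 2 ^ (Fintype.card ι) * ∑ i ∈ s, c i ^ 2 := by
  classical
  induction s using Finset.induction_on with
  | empty => simp
  | @insert a s ha ih =>
    have key : ∀ d : ι → Bool, (∑ i ∈ insert a s, sg (d i) * c i) ^ 2
        = c a ^ 2 + 2 * c a * (sg (d a) * (∑ i ∈ s, sg (d i) * c i))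
          + (∑ i ∈ s, sg (d i) * c i) ^ 2 := by
      intro d
      rw [Finset.sum_insert ha]
      have h2 := sg_sq (d a)
      nlinarith [sg_sq (d a)]
    calc ∑ d : ι → Bool, (∑ i ∈ insert a s, sg (d i) * c i) ^ 2
        = ∑ d : ι → Bool, (c a ^ 2 + 2 * c a * (sg (d a) * (∑ i ∈ s, sg (d i) * c i))
            + (∑ i ∈ s, sg (d i) * c i) ^ 2) := by
          exact Finset.sum_congr rfl fun d _ => key d
      _ = 2 ^ (Fintype.card ι) * c a ^ 2
            + 2 * c a * ∑ d : ι → Bool, sg (d a) * (∑ i ∈ s, sg (d i) * c i)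
            + ∑ d : ι → Bool, (∑ i ∈ s, sg (d i) * c i) ^ 2 := by
          rw [Finset.sum_add_distrib, Finset.sum_add_distrib, Finset.sum_const,
            ← Finset.mul_sum]
          simp [Fintype.card_fun, mul_comm]
      _ = 2 ^ (Fintype.card ι) * ∑ i ∈ insert a s, c i ^ 2 := by
          rw [sum_sg_mul_eq_zero a _ (fun d b => update_sum s a ha c d b), ih,
            Finset.sum_insert ha]
          ring

/-- Fourth moment of a Rademacher sum over the Boolean cube. -/
lemma sum_quad_le (s : Finset ι) (c : ι → ℝ) :
    ∑ d : ι → Bool, (∑ i ∈ s, sg (d i) * c i) ^ 4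
      ≤ 3 * 2 ^ (Fintype.card ι) * (∑ i ∈ s, c i ^ 2) ^ 2 := by
  classical
  induction s using Finset.induction_on with
  | empty => simp
  | @insert a s ha ih =>
    set Y : (ι → Bool) → ℝ := fun d => ∑ i ∈ s, sg (d i) * c i with hY
    have key : ∀ d : ι → Bool, (∑ i ∈ insert a s, sg (d i) * c i) ^ 4
        = c a ^ 4 + 4 * c a ^ 3 * (sg (d a) * Y d) + 6 * c a ^ 2 * (Y d) ^ 2
          + 4 * c a * (sg (d a) * (Y d) ^ 3) + (Y d) ^ 4 := by
      intro d
      rw [Finset.sum_insert ha]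
      have he : sg (d a) ^ 2 = 1 := sg_sq (d a)
      linear_combination (c a ^ 4 * (sg (d a) ^ 2 + 1) + 4 * c a ^ 3 * Y d * sg (d a)
        + 6 * c a ^ 2 * (Y d) ^ 2) * he
    have hupd : ∀ (d : ι → Bool) (b : Bool), Y (Function.update d a b) = Y d :=
      fun d b => update_sum s a ha c d b
    have hz1 : ∑ d : ι → Bool, sg (d a) * Y d = 0 :=
      sum_sg_mul_eq_zero a Y hupd
    have hz3 : ∑ d : ι → Bool, sg (d a) * (Y d) ^ 3 = 0 :=
      sum_sg_mul_eq_zero a (fun d => (Y d) ^ 3) (fun d b => by simp only [hupd])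
    have hsq : ∑ d : ι → Bool, (Y d) ^ 2 = 2 ^ (Fintype.card ι) * ∑ i ∈ s, c i ^ 2 :=
      sum_sq_eq s c
    have expand : ∑ d : ι → Bool, (∑ i ∈ insert a s, sg (d i) * c i) ^ 4
        = 2 ^ (Fintype.card ι) * c a ^ 4
          + 6 * c a ^ 2 * (2 ^ (Fintype.card ι) * ∑ i ∈ s, c i ^ 2)
          + ∑ d : ι → Bool, (Y d) ^ 4 := by
      rw [Finset.sum_congr rfl fun d _ => key d]
      rw [Finset.sum_add_distrib, Finset.sum_add_distrib, Finset.sum_add_distrib,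
        Finset.sum_add_distrib, Finset.sum_const, ← Finset.mul_sum, ← Finset.mul_sum,
        ← Finset.mul_sum, hz1, hz3, hsq]
      simp [Fintype.card_fun]
    rw [expand, Finset.sum_insert ha]
    have hV : (0:ℝ) ≤ ∑ i ∈ s, c i ^ 2 := Finset.sum_nonneg fun i _ => sq_nonneg _
    have hP : (0:ℝ) < 2 ^ (Fintype.card ι) := by positivity
    nlinarith [ih, mul_nonneg hP.le (by positivity : (0:ℝ) ≤ c a ^ 4),
      mul_nonneg hP.le (mul_nonneg (sq_nonneg (c a)) hV)]

/-- A Littlewood–Offord anticoncentration bound, via Sperner's theorem. -/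
lemma littlewood_offord (a : ι → ℝ) (t : ℝ) (ht : 0 ≤ t)
    (J : Finset ι) (hJ : ∀ j ∈ J, t < |a j|) :
    (Finset.univ.filter (fun ε : ι → Bool => |∑ j, sg (ε j) * a j| ≤ t)).card
      ≤ J.card.choose (J.card / 2) * 2 ^ (Fintype.card ι - J.card) := by
  classical
  set P : (ι → Bool) → Prop := fun ε => |∑ j, sg (ε j) * a j| ≤ t with hP
  set r : (ι → Bool) → ({x : ι // x ∉ J} → Bool) := fun ε x => ε x.1 with hr
  set φ : (ι → Bool) → Finset {x : ι // x ∈ J} :=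
    fun ε => Finset.univ.filter (fun j : {x : ι // x ∈ J} => ε j.1 = decide (0 < a j.1)) with hφ
  have hmemφ : ∀ (ε : ι → Bool) (j : {x : ι // x ∈ J}),
      j ∈ φ ε ↔ ε j.1 = decide (0 < a j.1) := by
    intro ε j; simp [hφ]
  have hfib := Finset.card_eq_sum_card_fiberwise
    (s := Finset.univ.filter P) (t := (Finset.univ : Finset ({x : ι // x ∉ J} → Bool)))
    (f := r) (fun x _ => Finset.mem_univ _)
  rw [hfib]
  have hbound : ∀ ρ : {x : ι // x ∉ J} → Bool,
      ((Finset.univ.filter P).filter (fun ε => r ε = ρ)).card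
        ≤ J.card.choose (J.card / 2) := by
    intro ρ
    set S := (Finset.univ.filter P).filter (fun ε => r ε = ρ) with hS
    have hoff : ∀ ε₁ ∈ S, ∀ ε₂ ∈ S, ∀ x : ι, x ∉ J → ε₁ x = ε₂ x := by
      intro ε₁ h₁ ε₂ h₂ x hx
      have hρ₁ : r ε₁ = ρ := (Finset.mem_filter.mp h₁).2
      have hρ₂ : r ε₂ = ρ := (Finset.mem_filter.mp h₂).2
      have e1 := congrFun hρ₁ ⟨x, hx⟩
      have e2 := congrFun hρ₂ ⟨x, hx⟩
      rw [← e2] at e1; exact e1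
    have hinj : Set.InjOn φ S := by
      intro ε₁ h₁ ε₂ h₂ hφeq
      funext x
      by_cases hx : x ∈ J
      · have h1 := hmemφ ε₁ ⟨x, hx⟩
        have h2 := hmemφ ε₂ ⟨x, hx⟩
        rw [hφeq] at h1
        by_cases hd : ε₂ x = decide (0 < a x)
        · rw [h1.mp (h2.mpr hd), hd]
        · have h1' : ε₁ x ≠ decide (0 < a x) := fun hc => hd (h2.mp (h1.mpr hc))
          rw [bool_ne_iff.mp h1', bool_ne_iff.mp hd]
      · exact hoff ε₁ h₁ ε₂ h₂ x hx
    have hanti : IsAntichain (· ⊆ ·) ((S.image φ) : Set (Finset {x : ι // x ∈ J})) := by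
      rintro T₁ hT₁ T₂ hT₂ hne hsub
      obtain ⟨ε₁, hε₁S, rfl⟩ := Finset.mem_image.mp (Finset.mem_coe.mp hT₁)
      obtain ⟨ε₂, hε₂S, rfl⟩ := Finset.mem_image.mp (Finset.mem_coe.mp hT₂)
      have hP₁ : P ε₁ := (Finset.mem_filter.mp ((Finset.mem_filter.mp hε₁S).1)).2
      have hP₂ : P ε₂ := (Finset.mem_filter.mp ((Finset.mem_filter.mp hε₂S).1)).2
      have hbig : ∀ (j : ι) (hjJ : j ∈ J), ε₁ j ≠ ε₂ j →
          (sg (ε₂ j) - sg (ε₁ j)) * a j = 2 * |a j| := by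
        intro j hjJ hne'
        have haj : a j ≠ 0 := by
          intro h; have := hJ j hjJ; rw [h] at this; simp at this; linarith
        have h1 := hmemφ ε₁ ⟨j, hjJ⟩
        have h2 := hmemφ ε₂ ⟨j, hjJ⟩
        have hj1 : ε₁ j ≠ decide (0 < a j) := by
          intro hc
          have : (⟨j, hjJ⟩ : {x : ι // x ∈ J}) ∈ φ ε₂ := hsub (h1.mpr hc)
          exact hne' (hc.trans (h2.mp this).symm)
        have hj2 : ε₂ j = decide (0 < a j) := by
          by_contra hc
          exact hne' ((bool_ne_iff.mp hj1).trans (bool_ne_iff.mp hc).symm)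
        rw [hj2, bool_ne_iff.mp hj1, ← sg_mul_abs haj]
        have : sg (!decide (0 < a j)) = - sg (decide (0 < a j)) := by
          cases (decide (0 < a j)) <;> simp [sg]
        rw [this]; ring
      have hterm : ∀ j : ι, 0 ≤ (sg (ε₂ j) - sg (ε₁ j)) * a j := by
        intro j
        by_cases hjJ : j ∈ J
        · by_cases heq : ε₁ j = ε₂ j
          · rw [heq]; simp
          · rw [hbig j hjJ heq]; positivity
        · rw [hoff ε₁ hε₁S ε₂ hε₂S j hjJ]; simp
      have hssub : ∃ u : {x : ι // x ∈ J}, u ∈ φ ε₂ ∧ u ∉ φ ε₁ :=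
        Finset.exists_of_ssubset ⟨hsub, fun h => hne (Finset.Subset.antisymm hsub h)⟩
      obtain ⟨u, hu₂, hu₁⟩ := hssub
      have hne' : ε₁ u.1 ≠ ε₂ u.1 := by
        intro hc
        exact hu₁ ((hmemφ ε₁ u).mpr (hc.trans ((hmemφ ε₂ u).mp hu₂)))
      have hbig' : 2 * t < (sg (ε₂ u.1) - sg (ε₁ u.1)) * a u.1 := by
        rw [hbig u.1 u.2 hne']
        have := hJ u.1 u.2
        linarith
      have hD : 2 * t < ∑ j, (sg (ε₂ j) - sg (ε₁ j)) * a j :=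
        lt_of_lt_of_le hbig' (Finset.single_le_sum (fun j _ => hterm j) (Finset.mem_univ u.1))
      have hsplit : ∑ j, (sg (ε₂ j) - sg (ε₁ j)) * a j
          = (∑ j, sg (ε₂ j) * a j) - ∑ j, sg (ε₁ j) * a j := by
        rw [← Finset.sum_sub_distrib]; apply Finset.sum_congr rfl; intros; ring
      rw [hsplit] at hD
      linarith [(abs_le.mp hP₁).1, (abs_le.mp hP₂).2]
    calc S.card = (S.image φ).card := (Finset.card_image_of_injOn hinj).symm
      _ ≤ (Fintype.card {x : ι // x ∈ J}).choose (Fintype.card {x : ι // x ∈ J} / 2) :=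
          IsAntichain.sperner hanti
      _ = J.card.choose (J.card / 2) := by rw [Fintype.card_coe]
  calc ∑ ρ : {x : ι // x ∉ J} → Bool,
        ((Finset.univ.filter P).filter (fun ε => r ε = ρ)).card
      ≤ ∑ _ρ : {x : ι // x ∉ J} → Bool, J.card.choose (J.card / 2) :=
        Finset.sum_le_sum (fun ρ _ => hbound ρ)
    _ = J.card.choose (J.card / 2) * 2 ^ (Fintype.card ι - J.card) := by
        rw [Finset.sum_const, Finset.card_univ, Fintype.card_fun, Fintype.card_bool]
        rw [Fintype.card_subtype_compl, Fintype.card_coe]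
        ring

end Cube

lemma had_orth (n : ℕ) (a b : Fin n → Fin 2) :
    ∑ j, hadamardMatrix n a j * hadamardMatrix n b j = if a = b then 1 else 0 := by
  classical
  have hentry : ∀ j : Fin n → Fin 2, hadamardMatrix n a j * hadamardMatrix n b j
      = ∏ i : Fin n, ((if a i = 1 ∧ j i = 1 then -(1 / Real.sqrt 2) else 1 / Real.sqrt 2) *
          (if b i = 1 ∧ j i = 1 then -(1 / Real.sqrt 2) else 1 / Real.sqrt 2)) := by
    intro j
    rw [hadamardMatrix]
    simp only [Matrix.of_apply]
    rw [← Finset.prod_mul_distrib]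
  rw [Finset.sum_congr rfl fun j _ => hentry j]
  rw [← Fintype.prod_sum (fun i (v : Fin 2) =>
    (if a i = 1 ∧ v = 1 then -(1 / Real.sqrt 2) else 1 / Real.sqrt 2) *
      (if b i = 1 ∧ v = 1 then -(1 / Real.sqrt 2) else 1 / Real.sqrt 2))]
  have hsq : (Real.sqrt 2)⁻¹ * (Real.sqrt 2)⁻¹ = 1 / 2 := by
    rw [← mul_inv, Real.mul_self_sqrt (by norm_num)]
    norm_num
  have hfac : ∀ i : Fin n, (∑ v : Fin 2,
      (if a i = 1 ∧ v = 1 then -(1 / Real.sqrt 2) else 1 / Real.sqrt 2) *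
        (if b i = 1 ∧ v = 1 then -(1 / Real.sqrt 2) else 1 / Real.sqrt 2))
      = if a i = b i then 1 else 0 := by
    intro i
    rw [Fin.sum_univ_two]
    have h0 : (0 : Fin 2) ≠ 1 := by decide
    rcases (by omega : a i = 0 ∨ a i = 1) with ha | ha <;>
      rcases (by omega : b i = 0 ∨ b i = 1) with hb | hb <;>
        rw [ha, hb] <;> norm_num [hsq]
  rw [Finset.prod_congr rfl fun i _ => hfac i, Finset.prod_boole]
  by_cases h : a = b
  · simp [h]
  · have : ¬ ∀ i ∈ Finset.univ, a i = b i :=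
      fun hc => h (funext fun i => hc i (Finset.mem_univ i))
    simp only [this, h, if_false]

lemma had_entry_sq (n : ℕ) (a b : Fin n → Fin 2) :
    (hadamardMatrix n a b) ^ 2 = (1/2 : ℝ) ^ n := by
  rw [hadamardMatrix]
  simp only [Matrix.of_apply]
  rw [← Finset.prod_pow]
  have : ∀ i : Fin n, ((if a i = 1 ∧ b i = 1 then -(1 / Real.sqrt 2) else 1 / Real.sqrt 2)) ^ 2
      = (1/2 : ℝ) := by
    intro i
    have h2 : (1 / Real.sqrt 2 : ℝ) ^ 2 = 1 / 2 := by
      rw [div_pow, one_pow, Real.sq_sqrt (by norm_num)]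
    by_cases h : a i = 1 ∧ b i = 1 <;> simp [h, h2]
  rw [Finset.prod_congr rfl fun i _ => this i, Finset.prod_const]
  simp

noncomputable def mvec (n : ℕ) (y : (Fin n → Fin 2) → ℝ) (d : (Fin n → Fin 2) → Bool)
    (j : Fin n → Fin 2) : ℝ :=
  ∑ i, sg (d i) * (y i * hadamardMatrix n i j)

lemma mvec_sq_sum (n : ℕ) (y : (Fin n → Fin 2) → ℝ) (hy : ∑ i, y i ^ 2 = 1)
    (d : (Fin n → Fin 2) → Bool) : ∑ j, (mvec n y d j) ^ 2 = 1 := by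
  classical
  have expand : ∀ j, (mvec n y d j) ^ 2
      = ∑ i, ∑ k, (sg (d i) * y i) * (sg (d k) * y k)
          * (hadamardMatrix n i j * hadamardMatrix n k j) := by
    intro j
    rw [mvec, sq, Finset.sum_mul_sum]
    apply Finset.sum_congr rfl; intro i _
    apply Finset.sum_congr rfl; intro k _
    ring
  rw [Finset.sum_congr rfl fun j _ => expand j]
  rw [Finset.sum_comm]
  have swap2 : ∀ i : Fin n → Fin 2,
      ∑ j, ∑ k, (sg (d i) * y i) * (sg (d k) * y k)
          * (hadamardMatrix n i j * hadamardMatrix n k j)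
      = ∑ k, (sg (d i) * y i) * (sg (d k) * y k)
          * ∑ j, hadamardMatrix n i j * hadamardMatrix n k j := by
    intro i
    rw [Finset.sum_comm]
    apply Finset.sum_congr rfl; intro k _
    rw [Finset.mul_sum]
  rw [Finset.sum_congr rfl fun i _ => swap2 i]
  have collapse : ∀ i : Fin n → Fin 2,
      (∑ k, (sg (d i) * y i) * (sg (d k) * y k)
          * ∑ j, hadamardMatrix n i j * hadamardMatrix n k j) = y i ^ 2 := by
    intro i
    have : ∀ k, (sg (d i) * y i) * (sg (d k) * y k)
        * (∑ j, hadamardMatrix n i j * hadamardMatrix n k j)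
        = if i = k then (sg (d i) * y i) * (sg (d k) * y k) else 0 := by
      intro k
      rw [had_orth n i k]
      by_cases h : i = k <;> simp [h]
    rw [Finset.sum_congr rfl fun k _ => this k, Finset.sum_ite_eq]
    simp only [Finset.mem_univ, if_true]
    nlinarith [sg_sq (d i)]
  rw [Finset.sum_congr rfl fun i _ => collapse i, hy]

lemma mvec_quad_sum (n : ℕ) (y : (Fin n → Fin 2) → ℝ) (hy : ∑ i, y i ^ 2 = 1)
    (j : Fin n → Fin 2) :
    ∑ d : (Fin n → Fin 2) → Bool, (mvec n y d j) ^ 4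
      ≤ 3 * 2 ^ (Fintype.card (Fin n → Fin 2)) * ((1/2 : ℝ) ^ n) ^ 2 := by
  classical
  have h := sum_quad_le (Finset.univ : Finset (Fin n → Fin 2))
    (fun i => y i * hadamardMatrix n i j)
  have hc : ∑ i, (y i * hadamardMatrix n i j) ^ 2 = (1/2 : ℝ) ^ n := by
    have : ∀ i : Fin n → Fin 2, (y i * hadamardMatrix n i j) ^ 2
        = y i ^ 2 * (1/2 : ℝ) ^ n := by
      intro i; rw [mul_pow, had_entry_sq]
    rw [Finset.sum_congr rfl fun i _ => this i, ← Finset.sum_mul, hy, one_mul]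
  rw [hc] at h
  exact h

end OSP

open OSP in
/-- **oblivious state preparation.** Let `N = 2^n` with `n ≥ 5`, let `y` be
any fixed unit vector in `ℝ^N`, let `d` be uniform on `{±1}^N` and `z` uniform on
`{±1/√N}^N`, independently (here both encoded by uniform Boolean vectors, with
probability given by counting over the uniform finite sample space), and set
`x = D·H_N·z` with `D = diag d`. Then `Pr[|⟨x,y⟩| > 1/(2N)] ≥ 3/5`. -/
theorem oblivious_state_preparation (n : ℕ) (hn : 5 ≤ n)
    (y : (Fin n → Fin 2) → ℝ) (hy : ∑ i, y i ^ 2 = 1) :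
    (3 : ℝ) / 5 ≤
      ((Finset.univ.filter
          (fun p : ((Fin n → Fin 2) → Bool) × ((Fin n → Fin 2) → Bool) =>
            1 / (2 * (2 : ℝ) ^ n) <
              |∑ i, (Matrix.mulVec
                  (Matrix.diagonal (fun i => if p.1 i then (1 : ℝ) else -1) *
                    hadamardMatrix n)
                  (fun j => (if p.2 j then (1 : ℝ) else -1) / Real.sqrt (2 ^ n))) i
                * y i|)).card : ℝ)
        / Fintype.card (((Fin n → Fin 2) → Bool) × ((Fin n → Fin 2) → Bool)) := by
  classical
  have hsq2 : Real.sqrt (2 ^ n) * Real.sqrt (2 ^ n) = 2 ^ n :=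
    Real.mul_self_sqrt (by positivity)
  have hsqpos : (0:ℝ) < Real.sqrt (2 ^ n) := Real.sqrt_pos.mpr (by positivity)
  set t : ℝ := 1 / (2 * Real.sqrt (2 ^ n)) with hts
  have ht0 : 0 ≤ t := by positivity
  -- rewrite the inner product
  have hval : ∀ d ε : (Fin n → Fin 2) → Bool,
      (∑ i, (Matrix.mulVec
          (Matrix.diagonal (fun i => if d i then (1 : ℝ) else -1) * hadamardMatrix n)
          (fun j => (if ε j then (1 : ℝ) else -1) / Real.sqrt (2 ^ n))) i * y i)
      = (Real.sqrt (2 ^ n))⁻¹ * ∑ j, sg (ε j) * mvec n y d j := by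
    intro d ε
    have hx : ∀ i, (Matrix.mulVec
        (Matrix.diagonal (fun i => if d i then (1 : ℝ) else -1) * hadamardMatrix n)
        (fun j => (if ε j then (1 : ℝ) else -1) / Real.sqrt (2 ^ n))) i
        = ∑ j, sg (d i) * hadamardMatrix n i j * (sg (ε j) / Real.sqrt (2 ^ n)) := by
      intro i
      simp only [Matrix.mulVec, dotProduct, Matrix.diagonal_mul, sg]
    calc ∑ i, (Matrix.mulVec _ _) i * y i
        = ∑ i, ∑ j, sg (d i) * hadamardMatrix n i j * (sg (ε j) / Real.sqrt (2 ^ n)) * y i := by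
          apply Finset.sum_congr rfl; intro i _
          rw [hx i, Finset.sum_mul]
      _ = ∑ j, ∑ i, sg (d i) * hadamardMatrix n i j * (sg (ε j) / Real.sqrt (2 ^ n)) * y i :=
          Finset.sum_comm
      _ = ∑ j, (Real.sqrt (2 ^ n))⁻¹ * (sg (ε j) * mvec n y d j) := by
          apply Finset.sum_congr rfl; intro j _
          rw [mvec, Finset.mul_sum, Finset.mul_sum]
          apply Finset.sum_congr rfl; intro i _
          field_simp
      _ = (Real.sqrt (2 ^ n))⁻¹ * ∑ j, sg (ε j) * mvec n y d j := by
          rw [Finset.mul_sum]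
  -- event equivalence
  have hev : ∀ p : ((Fin n → Fin 2) → Bool) × ((Fin n → Fin 2) → Bool),
      (1 / (2 * (2 : ℝ) ^ n) <
        |∑ i, (Matrix.mulVec
            (Matrix.diagonal (fun i => if p.1 i then (1 : ℝ) else -1) * hadamardMatrix n)
            (fun j => (if p.2 j then (1 : ℝ) else -1) / Real.sqrt (2 ^ n))) i * y i|)
      ↔ ¬ (|∑ j, sg (p.2 j) * mvec n y p.1 j| ≤ t) := by
    intro p
    rw [hval p.1 p.2, abs_mul, abs_of_nonneg (inv_nonneg.mpr hsqpos.le)]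
    rw [inv_mul_eq_div, lt_div_iff₀ hsqpos]
    have hkey : (1 : ℝ) / (2 * 2 ^ n) * Real.sqrt (2 ^ n) = t := by
      rw [hts]
      rw [div_mul_eq_mul_div, one_mul, div_eq_div_iff (by positivity) (by positivity)]
      linear_combination 2 * Real.sq_sqrt (by positivity : (0:ℝ) ≤ 2 ^ n)
    rw [hkey, not_le]
  -- notation
  set bigs : ((Fin n → Fin 2) → Bool) → Finset (Fin n → Fin 2) :=
    fun d => Finset.univ.filter (fun j => t < |mvec n y d j|) with hbigs
  set Mr : ℝ := 2 ^ (2 ^ n : ℕ) with hMr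
  have hMrpos : 0 < Mr := by positivity
  have hC : Fintype.card (Fin n → Fin 2) = 2 ^ n := by simp
  have hC32 : 32 ≤ 2 ^ n := by
    calc 32 = 2 ^ 5 := by norm_num
    _ ≤ 2 ^ n := Nat.pow_le_pow_right (by norm_num) hn
  have hhalf : ((1:ℝ)/2) ^ n ≤ 1/32 := by
    calc ((1:ℝ)/2) ^ n ≤ (1/2) ^ 5 :=
      pow_le_pow_of_le_one (by norm_num) (by norm_num) hn
    _ = 1/32 := by norm_num
  have ht2 : t ^ 2 = 1 / (4 * 2 ^ n) := by
    rw [hts, div_pow, one_pow, mul_pow, Real.sq_sqrt (by positivity : (0:ℝ) ≤ 2 ^ n)]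
    norm_num
  -- mass of big coordinates
  have hmass : ∀ d : (Fin n → Fin 2) → Bool, (3:ℝ)/4 ≤ ∑ j ∈ bigs d, mvec n y d j ^ 2 := by
    intro d
    have h1 := mvec_sq_sum n y hy d
    have hsplit := Finset.sum_filter_add_sum_filter_not Finset.univ
      (fun j => t < |mvec n y d j|) (fun j => mvec n y d j ^ 2)
    have hsmall : ∑ j ∈ Finset.univ.filter (fun j => ¬ t < |mvec n y d j|),
        mvec n y d j ^ 2 ≤ 1/4 := by
      have hstep : ∑ j ∈ Finset.univ.filter (fun j => ¬ t < |mvec n y d j|),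
          mvec n y d j ^ 2
          ≤ ∑ _j ∈ Finset.univ.filter (fun j => ¬ t < |mvec n y d j|), t ^ 2 := by
        apply Finset.sum_le_sum
        intro j hj
        have hj' := (Finset.mem_filter.mp hj).2
        have : |mvec n y d j| ≤ t := not_lt.mp hj'
        calc mvec n y d j ^ 2 = |mvec n y d j| ^ 2 := (sq_abs _).symm
          _ ≤ t ^ 2 := pow_le_pow_left₀ (abs_nonneg _) this 2
      have hcard : ((Finset.univ.filter (fun j => ¬ t < |mvec n y d j|)).card : ℝ)
          ≤ (2:ℝ) ^ n := by
        calc ((Finset.univ.filter (fun j => ¬ t < |mvec n y d j|)).card : ℝ)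
            ≤ ((Finset.univ : Finset (Fin n → Fin 2)).card : ℝ) := by
              exact_mod_cast Finset.card_filter_le _ _
          _ = (2:ℝ) ^ n := by rw [Finset.card_univ, hC]; push_cast; ring
      calc ∑ j ∈ Finset.univ.filter (fun j => ¬ t < |mvec n y d j|), mvec n y d j ^ 2
          ≤ ∑ _j ∈ Finset.univ.filter (fun j => ¬ t < |mvec n y d j|), t ^ 2 := hstep
        _ = ((Finset.univ.filter (fun j => ¬ t < |mvec n y d j|)).card : ℝ) * t ^ 2 := by
            rw [Finset.sum_const, nsmul_eq_mul]
        _ ≤ (2:ℝ) ^ n * (1 / (4 * 2 ^ n)) := by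
            rw [ht2]
            apply mul_le_mul_of_nonneg_right hcard (by positivity)
        _ = 1/4 := by
            field_simp
    have : ∑ j ∈ bigs d, mvec n y d j ^ 2
        = 1 - ∑ j ∈ Finset.univ.filter (fun j => ¬ t < |mvec n y d j|), mvec n y d j ^ 2 := by
      rw [hbigs]
      linarith [hsplit, h1]
    rw [this]
    linarith
  -- bigs is nonempty
  have hne : ∀ d : (Fin n → Fin 2) → Bool, 1 ≤ (bigs d).card := by
    intro d
    by_contra h
    have : (bigs d).card = 0 := by omega
    have he : bigs d = ∅ := Finset.card_eq_zero.mp this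
    have := hmass d
    rw [he, Finset.sum_empty] at this
    linarith
  -- lower bound on the fourth moment when few big coordinates
  have hquadlow : ∀ (d : (Fin n → Fin 2) → Bool) (k₀ : ℕ), 1 ≤ k₀ → (bigs d).card ≤ k₀ →
      (9:ℝ)/(16*k₀) ≤ ∑ j, mvec n y d j ^ 4 := by
    intro d k₀ hk1 hkle
    have hcs := sq_sum_le_card_mul_sum_sq (s := bigs d)
      (f := fun j => mvec n y d j ^ 2)
    have h916 : (9:ℝ)/16 ≤ ((bigs d).card : ℝ) * ∑ j ∈ bigs d, (mvec n y d j ^ 2) ^ 2 := by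
      calc (9:ℝ)/16 = (3/4)^2 := by norm_num
        _ ≤ (∑ j ∈ bigs d, mvec n y d j ^ 2) ^ 2 :=
            pow_le_pow_left₀ (by norm_num) (hmass d) 2
        _ ≤ ((bigs d).card : ℝ) * ∑ j ∈ bigs d, (mvec n y d j ^ 2) ^ 2 := by
            exact_mod_cast hcs
    have hsub : ∑ j ∈ bigs d, (mvec n y d j ^ 2) ^ 2 ≤ ∑ j, mvec n y d j ^ 4 := by
      have : ∀ j, (mvec n y d j ^ 2) ^ 2 = mvec n y d j ^ 4 := by intro j; ring
      rw [Finset.sum_congr rfl fun j _ => this j]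
      apply Finset.sum_le_sum_of_subset_of_nonneg (Finset.filter_subset _ _)
      intro j _ _
      positivity
    have hkR : ((bigs d).card : ℝ) ≤ (k₀ : ℝ) := by exact_mod_cast hkle
    have hq0 : (0:ℝ) ≤ ∑ j ∈ bigs d, (mvec n y d j ^ 2) ^ 2 :=
      Finset.sum_nonneg fun j _ => by positivity
    have hk0 : (0:ℝ) < (k₀ : ℝ) := by exact_mod_cast hk1
    rw [div_le_iff₀ (by positivity)]
    calc (9:ℝ) = (9/16) * 16 := by norm_num
      _ ≤ (((bigs d).card : ℝ) * ∑ j ∈ bigs d, (mvec n y d j ^ 2) ^ 2) * 16 := by linarith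
      _ ≤ ((k₀:ℝ) * ∑ j, mvec n y d j ^ 4) * 16 := by
          have h1 : ((bigs d).card : ℝ) * ∑ j ∈ bigs d, (mvec n y d j ^ 2) ^ 2
              ≤ (k₀:ℝ) * ∑ j, mvec n y d j ^ 4 := by
            calc ((bigs d).card : ℝ) * ∑ j ∈ bigs d, (mvec n y d j ^ 2) ^ 2
                ≤ (k₀:ℝ) * ∑ j ∈ bigs d, (mvec n y d j ^ 2) ^ 2 :=
                  mul_le_mul_of_nonneg_right hkR hq0
              _ ≤ (k₀:ℝ) * ∑ j, mvec n y d j ^ 4 :=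
                  mul_le_mul_of_nonneg_left hsub hk0.le
          linarith
      _ = (∑ j, mvec n y d j ^ 4) * (16 * (k₀:ℝ)) := by ring
  -- total fourth moment
  have hcan : ((2:ℝ))^n * ((1:ℝ)/2)^n = 1 := by
    rw [← mul_pow]; norm_num
  have hquadtot : ∑ d : (Fin n → Fin 2) → Bool, ∑ j, mvec n y d j ^ 4
      ≤ 3 * Mr * ((1:ℝ)/2)^n := by
    rw [Finset.sum_comm]
    have h1 : ∀ j : Fin n → Fin 2, ∑ d : (Fin n → Fin 2) → Bool, mvec n y d j ^ 4
        ≤ 3 * Mr * (((1:ℝ)/2)^n)^2 := by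
      intro j
      have h := mvec_quad_sum n y hy j
      rw [hC] at h
      exact h
    calc ∑ j : Fin n → Fin 2, ∑ d : (Fin n → Fin 2) → Bool, mvec n y d j ^ 4
        ≤ ∑ _j : Fin n → Fin 2, 3 * Mr * (((1:ℝ)/2)^n)^2 :=
          Finset.sum_le_sum fun j _ => h1 j
      _ = ((2:ℝ)^n) * (3 * Mr * (((1:ℝ)/2)^n)^2) := by
          rw [Finset.sum_const, Finset.card_univ, hC, nsmul_eq_mul]
          push_cast
          ring
      _ = 3 * Mr * ((1:ℝ)/2)^n := by
          linear_combination (3 * Mr * ((1:ℝ)/2)^n) * hcan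
  -- Markov
  have hmarkov : ∀ k₀ : ℕ, 1 ≤ k₀ →
      ((Finset.univ.filter (fun d : (Fin n → Fin 2) → Bool => (bigs d).card ≤ k₀)).card : ℝ)
        ≤ (16 * (k₀:ℝ) / 3) * Mr * ((1:ℝ)/2)^n := by
    intro k₀ hk1
    have hk0 : (0:ℝ) < (k₀:ℝ) := by exact_mod_cast hk1
    set A := Finset.univ.filter (fun d : (Fin n → Fin 2) → Bool => (bigs d).card ≤ k₀) with hA
    have h1 : (A.card : ℝ) * (9/(16*(k₀:ℝ))) ≤ 3 * Mr * ((1:ℝ)/2)^n := by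
      calc (A.card:ℝ) * (9/(16*(k₀:ℝ))) = ∑ _d ∈ A, (9/(16*(k₀:ℝ))) := by
            rw [Finset.sum_const, nsmul_eq_mul]
        _ ≤ ∑ d ∈ A, ∑ j, mvec n y d j ^ 4 :=
            Finset.sum_le_sum fun d hd => hquadlow d k₀ hk1 (Finset.mem_filter.mp hd).2
        _ ≤ ∑ d : (Fin n → Fin 2) → Bool, ∑ j, mvec n y d j ^ 4 :=
            Finset.sum_le_sum_of_subset_of_nonneg (Finset.filter_subset _ _)
              (fun d _ _ => Finset.sum_nonneg fun j _ => by positivity)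
        _ ≤ 3 * Mr * ((1:ℝ)/2)^n := hquadtot
    calc (A.card:ℝ) = ((A.card:ℝ) * (9/(16*(k₀:ℝ)))) * (16*(k₀:ℝ)/9) := by
          field_simp
      _ ≤ (3 * Mr * ((1:ℝ)/2)^n) * (16*(k₀:ℝ)/9) :=
          mul_le_mul_of_nonneg_right h1 (by positivity)
      _ = (16 * (k₀:ℝ) / 3) * Mr * ((1:ℝ)/2)^n := by ring
  have hMh : Mr * ((1:ℝ)/2)^n ≤ Mr / 32 := by
    calc Mr * ((1:ℝ)/2)^n ≤ Mr * (1/32) := mul_le_mul_of_nonneg_left hhalf hMrpos.le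
      _ = Mr / 32 := by ring
  have hA2 : ((Finset.univ.filter
      (fun d : (Fin n → Fin 2) → Bool => (bigs d).card ≤ 2)).card : ℝ) ≤ Mr/3 := by
    have h := hmarkov 2 (by norm_num)
    push_cast at h
    nlinarith [h, hMh]
  have hA4 : ((Finset.univ.filter
      (fun d : (Fin n → Fin 2) → Bool => (bigs d).card ≤ 4)).card : ℝ) ≤ 2*Mr/3 := by
    have h := hmarkov 4 (by norm_num)
    push_cast at h
    nlinarith [h, hMh]
  -- Littlewood–Offord bound per d
  have hgen : ∀ (d : (Fin n → Fin 2) → Bool) (K : ℕ), K ≤ (bigs d).card → K ≤ 2^n →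
      ((Finset.univ.filter (fun ε : (Fin n → Fin 2) → Bool =>
        |∑ j, sg (ε j) * mvec n y d j| ≤ t)).card : ℝ)
        ≤ (K.choose (K/2) : ℝ) / 2^K * Mr := by
    intro d K hK hK2
    obtain ⟨J', hJ'sub, hJ'card⟩ := Finset.exists_subset_card_eq hK
    have hJ : ∀ j ∈ J', t < |mvec n y d j| := fun j hj =>
      (Finset.mem_filter.mp (hJ'sub hj)).2
    have h := littlewood_offord (mvec n y d) t ht0 J' hJ
    rw [hJ'card, hC] at h
    have hcast : ((Finset.univ.filter (fun ε : (Fin n → Fin 2) → Bool =>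
        |∑ j, sg (ε j) * mvec n y d j| ≤ t)).card : ℝ)
        ≤ (K.choose (K/2) : ℝ) * 2^(2^n - K) := by exact_mod_cast h
    have hpow : (2:ℝ) ^ (2^n - K) * 2^K = Mr := by
      have he : 2^n - K + K = 2^n := Nat.sub_add_cancel hK2
      rw [hMr, ← pow_add, he]
    calc ((Finset.univ.filter (fun ε : (Fin n → Fin 2) → Bool =>
          |∑ j, sg (ε j) * mvec n y d j| ≤ t)).card : ℝ)
        ≤ (K.choose (K/2) : ℝ) * 2^(2^n - K) := hcast
      _ = (K.choose (K/2) : ℝ) / 2^K * ((2:ℝ) ^ (2^n - K) * 2^K) := by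
          field_simp
      _ = (K.choose (K/2) : ℝ) / 2^K * Mr := by rw [hpow]
  -- the per-d bound with the if-chain
  have hK2n : ∀ K : ℕ, K ≤ 7 → K ≤ 2^n := fun K hK => by omega
  have hBd : ∀ d : (Fin n → Fin 2) → Bool,
      ((Finset.univ.filter (fun ε : (Fin n → Fin 2) → Bool =>
        |∑ j, sg (ε j) * mvec n y d j| ≤ t)).card : ℝ)
      ≤ (if 7 ≤ (bigs d).card then (35:ℝ)/128 else if 5 ≤ (bigs d).card then 5/16
          else if 3 ≤ (bigs d).card then 3/8 else 1/2) * Mr := by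
    intro d
    by_cases h7 : 7 ≤ (bigs d).card
    · rw [if_pos h7]
      have h := hgen d 7 h7 (hK2n 7 (by norm_num))
      have e : ((Nat.choose 7 (7/2)) : ℝ) / 2^7 = 35/128 := by
        norm_num [show Nat.choose 7 (7/2) = 35 from by decide]
      rwa [e] at h
    · rw [if_neg h7]
      by_cases h5 : 5 ≤ (bigs d).card
      · rw [if_pos h5]
        have h := hgen d 5 h5 (hK2n 5 (by norm_num))
        have e : ((Nat.choose 5 (5/2)) : ℝ) / 2^5 = 5/16 := by
          norm_num [show Nat.choose 5 (5/2) = 10 from by decide]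
        rwa [e] at h
      · rw [if_neg h5]
        by_cases h3 : 3 ≤ (bigs d).card
        · rw [if_pos h3]
          have h := hgen d 3 h3 (hK2n 3 (by norm_num))
          have e : ((Nat.choose 3 (3/2)) : ℝ) / 2^3 = 3/8 := by
            norm_num [show Nat.choose 3 (3/2) = 3 from by decide]
          rwa [e] at h
        · rw [if_neg h3]
          have h := hgen d 1 (hne d) (hK2n 1 (by norm_num))
          have e : ((Nat.choose 1 (1/2)) : ℝ) / 2^1 = 1/2 := by
            norm_num [show Nat.choose 1 (1/2) = 1 from by decide]
          rwa [e] at h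
  -- pointwise identity for the if-chain
  have hgid : ∀ d : (Fin n → Fin 2) → Bool,
      (if 7 ≤ (bigs d).card then (35:ℝ)/128 else if 5 ≤ (bigs d).card then 5/16
          else if 3 ≤ (bigs d).card then 3/8 else 1/2)
      = 35/128 + ((if (bigs d).card ≤ 6 then (5:ℝ)/128 else 0)
          + ((if (bigs d).card ≤ 4 then (1:ℝ)/16 else 0)
            + (if (bigs d).card ≤ 2 then (1:ℝ)/8 else 0))) := by
    intro d
    by_cases h7 : 7 ≤ (bigs d).card
    · rw [if_pos h7, if_neg (by omega), if_neg (by omega), if_neg (by omega)]; norm_num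
    · by_cases h5 : 5 ≤ (bigs d).card
      · rw [if_neg h7, if_pos h5, if_pos (by omega), if_neg (by omega), if_neg (by omega)]
        norm_num
      · by_cases h3 : 3 ≤ (bigs d).card
        · rw [if_neg h7, if_neg h5, if_pos h3, if_pos (by omega), if_pos (by omega),
            if_neg (by omega)]
          norm_num
        · rw [if_neg h7, if_neg h5, if_neg h3, if_pos (by omega), if_pos (by omega),
            if_pos (by omega)]
          norm_num
  -- cardinality of the d-cube
  have hcubecard : (((Finset.univ : Finset ((Fin n → Fin 2) → Bool))).card : ℝ) = Mr := by
    rw [Finset.card_univ, Fintype.card_fun, Fintype.card_bool, hC, hMr]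
    push_cast
    ring
  -- sum of indicator terms
  have hindsum : ∀ (k₀ : ℕ) (c : ℝ), 0 ≤ c →
      ∑ d : (Fin n → Fin 2) → Bool, (if (bigs d).card ≤ k₀ then c else 0)
      = ((Finset.univ.filter (fun d : (Fin n → Fin 2) → Bool =>
          (bigs d).card ≤ k₀)).card : ℝ) * c := by
    intro k₀ c _
    rw [← Finset.sum_filter, Finset.sum_const, nsmul_eq_mul]
  -- sum the if-chain
  have hgbsum : ∑ d : (Fin n → Fin 2) → Bool,
      (if 7 ≤ (bigs d).card then (35:ℝ)/128 else if 5 ≤ (bigs d).card then 5/16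
          else if 3 ≤ (bigs d).card then 3/8 else 1/2)
      ≤ 19/48 * Mr := by
    rw [Finset.sum_congr rfl fun d _ => hgid d]
    rw [Finset.sum_add_distrib, Finset.sum_add_distrib, Finset.sum_add_distrib,
      Finset.sum_const, nsmul_eq_mul, hcubecard]
    rw [hindsum 6 (5/128) (by norm_num), hindsum 4 (1/16) (by norm_num),
      hindsum 2 (1/8) (by norm_num)]
    have h6 : ((Finset.univ.filter (fun d : (Fin n → Fin 2) → Bool =>
        (bigs d).card ≤ 6)).card : ℝ) ≤ Mr := by
      rw [← hcubecard]
      exact_mod_cast Finset.card_filter_le _ _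
    nlinarith [hA2, hA4, h6]
  -- fiberwise count of the bad set
  set badS := Finset.univ.filter
    (fun p : ((Fin n → Fin 2) → Bool) × ((Fin n → Fin 2) → Bool) =>
      |∑ j, sg (p.2 j) * mvec n y p.1 j| ≤ t) with hbadS
  have hfib : badS.card = ∑ d : (Fin n → Fin 2) → Bool,
      (badS.filter (fun p => p.1 = d)).card :=
    Finset.card_eq_sum_card_fiberwise (fun x _ => Finset.mem_univ _)
  have hfb : ∀ d : (Fin n → Fin 2) → Bool,
      (badS.filter (fun p => p.1 = d)).card
        ≤ (Finset.univ.filter (fun ε : (Fin n → Fin 2) → Bool =>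
            |∑ j, sg (ε j) * mvec n y d j| ≤ t)).card := by
    intro d
    apply Finset.card_le_card_of_injOn (fun p => p.2)
    · intro p hp
      obtain ⟨hpb, hp1⟩ := Finset.mem_filter.mp hp
      have hbp := (Finset.mem_filter.mp hpb).2
      rw [Finset.mem_coe, Finset.mem_filter]
      refine ⟨Finset.mem_univ _, ?_⟩
      rw [← hp1]
      exact hbp
    · intro p hp q hq h
      have hp1 : p.1 = d := (Finset.mem_filter.mp hp).2
      have hq1 : q.1 = d := (Finset.mem_filter.mp hq).2
      exact Prod.ext (hp1.trans hq1.symm) h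
  have hbad : (badS.card : ℝ) ≤ 19/48 * Mr^2 := by
    calc (badS.card : ℝ)
        = ∑ d : (Fin n → Fin 2) → Bool, ((badS.filter (fun p => p.1 = d)).card : ℝ) := by
          exact_mod_cast hfib
      _ ≤ ∑ d : (Fin n → Fin 2) → Bool,
            ((Finset.univ.filter (fun ε : (Fin n → Fin 2) → Bool =>
              |∑ j, sg (ε j) * mvec n y d j| ≤ t)).card : ℝ) :=
          Finset.sum_le_sum fun d _ => by exact_mod_cast hfb d
      _ ≤ ∑ d : (Fin n → Fin 2) → Bool,
            (if 7 ≤ (bigs d).card then (35:ℝ)/128 else if 5 ≤ (bigs d).card then 5/16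
              else if 3 ≤ (bigs d).card then 3/8 else 1/2) * Mr :=
          Finset.sum_le_sum fun d _ => hBd d
      _ = (∑ d : (Fin n → Fin 2) → Bool,
            (if 7 ≤ (bigs d).card then (35:ℝ)/128 else if 5 ≤ (bigs d).card then 5/16
              else if 3 ≤ (bigs d).card then 3/8 else 1/2)) * Mr := by
          rw [Finset.sum_mul]
      _ ≤ (19/48 * Mr) * Mr := mul_le_mul_of_nonneg_right hgbsum hMrpos.le
      _ = 19/48 * Mr^2 := by ring
  -- conclude
  set G := Finset.univ.filter
    (fun p : ((Fin n → Fin 2) → Bool) × ((Fin n → Fin 2) → Bool) =>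
      1 / (2 * (2 : ℝ) ^ n) <
        |∑ i, (Matrix.mulVec
            (Matrix.diagonal (fun i => if p.1 i then (1 : ℝ) else -1) * hadamardMatrix n)
            (fun j => (if p.2 j then (1 : ℝ) else -1) / Real.sqrt (2 ^ n))) i * y i|)
    with hG
  have hGeq : G = Finset.univ.filter
      (fun p : ((Fin n → Fin 2) → Bool) × ((Fin n → Fin 2) → Bool) =>
        ¬ |∑ j, sg (p.2 j) * mvec n y p.1 j| ≤ t) := by
    rw [hG]
    exact Finset.filter_congr fun p _ => hev p
  have htotN : (Finset.univ : Finset (((Fin n → Fin 2) → Bool) × ((Fin n → Fin 2) → Bool))).card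
      = Fintype.card (((Fin n → Fin 2) → Bool) × ((Fin n → Fin 2) → Bool)) :=
    Finset.card_univ
  have hcompl := Finset.card_filter_add_card_filter_not
    (s := (Finset.univ : Finset (((Fin n → Fin 2) → Bool) × ((Fin n → Fin 2) → Bool))))
    (p := fun p => |∑ j, sg (p.2 j) * mvec n y p.1 j| ≤ t)
  have htot : ((Fintype.card (((Fin n → Fin 2) → Bool) × ((Fin n → Fin 2) → Bool))) : ℝ)
      = Mr^2 := by
    rw [Fintype.card_prod, Fintype.card_fun, Fintype.card_bool, hC, hMr]
    push_cast
    ring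
  rw [htot, le_div_iff₀ (by positivity)]
  have hGval : (G.card : ℝ) + (badS.card : ℝ) = Mr^2 := by
    rw [hGeq]
    rw [← htot, ← htotN]
    exact_mod_cast by linarith [hcompl]
  nlinarith [hbad, hGval, sq_nonneg Mr]
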